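/- For every integer c ≥ 1, the c-color gadget D_c admits a c-gel, i.e., a good edge-labeling taking at most c distinct values. -/

import Mathlib

/-- A walk is *increasing* with respect to an edge-labeling if the sequence of labels of its
edges, traversed from the first endpoint to the last, is non-decreasing. -/
def IsIncreasing {V : Type*} (G : SimpleGraph V) (lab : Sym2 V → ℝ) {x y : V}
    (p : G.Walk x y) : Prop :=
  (p.edges.map lab).Chain' (· ≤ ·)

/-- An edge-labeling is *good* if for every ordered pair `(x, y)` of vertices there do not
exist two distinct increasing paths from `x` to `y`. -/
def IsGoodLabeling {V : Type*} (G : SimpleGraph V) (lab : Sym2 V → ℝ) : Prop :=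
  ∀ (x y : V) (p q : G.Walk x y), p.IsPath → q.IsPath →
    IsIncreasing G lab p → IsIncreasing G lab q → p = q

/-- The vertices of the `c`-color gadget: `Sum.inl ()` is the vertex `v`, `Sum.inr (Sum.inl i)`
is the vertex `v_i`, and `Sum.inr (Sum.inr p)` with `p.1 < p.2` is the vertex `v_{i,j}`. -/
def DVert (c : ℕ) : Type :=
  Unit ⊕ Fin c ⊕ {p : Fin c × Fin c // p.1 < p.2}

/-- The `c`-color gadget `D_c`, with edges `v v_i` for each `i`, and `v_i v_{i,j}`,
`v_j v_{i,j}` for each `i < j`. -/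
def DGadget (c : ℕ) : SimpleGraph (DVert c) :=
  SimpleGraph.fromRel (fun a b =>
    (∃ i : Fin c, a = Sum.inl () ∧ b = Sum.inr (Sum.inl i)) ∨
    (∃ (i : Fin c) (p : {p : Fin c × Fin c // p.1 < p.2}),
      a = Sum.inr (Sum.inl i) ∧ b = Sum.inr (Sum.inr p) ∧ (p.val.1 = i ∨ p.val.2 = i)))

namespace CG

variable {c : ℕ}

abbrev Pair (c : ℕ) := {p : Fin c × Fin c // p.1 < p.2}

abbrev vA : DVert c := Sum.inl ()
abbrev vB (i : Fin c) : DVert c := Sum.inr (Sum.inl i)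
abbrev vC (r : Pair c) : DVert c := Sum.inr (Sum.inr r)

def labF (c : ℕ) : (Unit ⊕ Fin c ⊕ Pair c) → (Unit ⊕ Fin c ⊕ Pair c) → ℝ
  | Sum.inl _, Sum.inr (Sum.inl i) => ((i : ℕ) : ℝ)
  | Sum.inr (Sum.inl i), Sum.inl _ => ((i : ℕ) : ℝ)
  | Sum.inr (Sum.inl k), Sum.inr (Sum.inr r) =>
      if r.1.1 = k then ((r.1.2 : ℕ) : ℝ) else ((r.1.1 : ℕ) : ℝ)
  | Sum.inr (Sum.inr r), Sum.inr (Sum.inl k) =>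
      if r.1.1 = k then ((r.1.2 : ℕ) : ℝ) else ((r.1.1 : ℕ) : ℝ)
  | _, _ => 0

lemma labF_symm (x y : DVert c) : labF c x y = labF c y x := by
  rcases x with _ | i | r <;> rcases y with _ | j | s <;> rfl

def glab (c : ℕ) : Sym2 (DVert c) → ℝ :=
  Sym2.lift ⟨labF c, labF_symm⟩

@[simp] lemma glab_AB (i : Fin c) : glab c s(vA, vB i) = ((i : ℕ) : ℝ) := rfl
@[simp] lemma glab_BA (i : Fin c) : glab c s(vB i, vA) = ((i : ℕ) : ℝ) := rfl
@[simp] lemma glab_BC1 (r : Pair c) : glab c s(vB r.1.1, vC r) = ((r.1.2 : ℕ) : ℝ) := by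
  show (if r.1.1 = r.1.1 then _ else _) = _
  simp
@[simp] lemma glab_CB1 (r : Pair c) : glab c s(vC r, vB r.1.1) = ((r.1.2 : ℕ) : ℝ) := by
  show (if r.1.1 = r.1.1 then _ else _) = _
  simp
@[simp] lemma glab_BC2 (r : Pair c) : glab c s(vB r.1.2, vC r) = ((r.1.1 : ℕ) : ℝ) := by
  show (if r.1.1 = r.1.2 then _ else _) = _
  rw [if_neg (ne_of_lt r.2)]
@[simp] lemma glab_CB2 (r : Pair c) : glab c s(vC r, vB r.1.2) = ((r.1.1 : ℕ) : ℝ) := by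
  show (if r.1.1 = r.1.2 then _ else _) = _
  rw [if_neg (ne_of_lt r.2)]


lemma vA_ne_vB {i : Fin c} (h : (vA : DVert c) = vB i) : False := nomatch h
lemma vA_ne_vC {r : Pair c} (h : (vA : DVert c) = vC r) : False := nomatch h
lemma vB_ne_vA {i : Fin c} (h : (vB i : DVert c) = vA) : False := nomatch h
lemma vC_ne_vA {r : Pair c} (h : (vC r : DVert c) = vA) : False := nomatch h
lemma vB_inj {i j : Fin c} (h : (vB i : DVert c) = vB j) : i = j := by
  injection h with h; injection h
lemma vC_inj {r s : Pair c} (h : (vC r : DVert c) = vC s) : r = s := by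
  injection h with h; injection h
lemma vB_ne_vC {i : Fin c} {r : Pair c} (h : (vB i : DVert c) = vC r) : False := by
  injection h with h; exact Sum.inl_ne_inr h
lemma vC_ne_vB {i : Fin c} {r : Pair c} (h : (vC r : DVert c) = vB i) : False := by
  injection h with h; exact Sum.inr_ne_inl h

lemma pair_ext {r s : Pair c} (h1 : r.1.1 = s.1.1) (h2 : r.1.2 = s.1.2) : r = s := by
  apply Subtype.ext
  exact Prod.ext h1 h2

lemma adj_elim {x y : DVert c} (h : (DGadget c).Adj x y) :
    (∃ i, x = vA ∧ y = vB i) ∨ (∃ i, x = vB i ∧ y = vA) ∨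
    (∃ i r, x = vB i ∧ y = vC r ∧ (r.1.1 = i ∨ r.1.2 = i)) ∨
    (∃ i r, x = vC r ∧ y = vB i ∧ (r.1.1 = i ∨ r.1.2 = i)) := by
  rw [DGadget, SimpleGraph.fromRel_adj] at h
  obtain ⟨-, h | h⟩ := h
  · rcases h with ⟨i, rfl, rfl⟩ | ⟨i, r, rfl, rfl, hr⟩
    · exact Or.inl ⟨i, rfl, rfl⟩
    · exact Or.inr (Or.inr (Or.inl ⟨i, r, rfl, rfl, hr⟩))
  · rcases h with ⟨i, rfl, rfl⟩ | ⟨i, r, rfl, rfl, hr⟩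
    · exact Or.inr (Or.inl ⟨i, rfl, rfl⟩)
    · exact Or.inr (Or.inr (Or.inr ⟨i, r, rfl, rfl, hr⟩))

lemma nbr_A {y : DVert c} (h : (DGadget c).Adj vA y) : ∃ i, y = vB i := by
  rcases adj_elim h with ⟨i, _, rfl⟩ | ⟨i, hx, _⟩ | ⟨i, r, hx, _, _⟩ | ⟨i, r, hx, _, _⟩
  · exact ⟨i, rfl⟩
  · exact (vA_ne_vB hx).elim
  · exact (vA_ne_vB hx).elim
  · exact (vA_ne_vC hx).elim

lemma nbr_B {m : Fin c} {y : DVert c} (h : (DGadget c).Adj (vB m) y) :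
    y = vA ∨ ∃ r : Pair c, y = vC r ∧ (r.1.1 = m ∨ r.1.2 = m) := by
  rcases adj_elim h with ⟨i, hx, _⟩ | ⟨i, hx, rfl⟩ | ⟨i, r, hx, rfl, hr⟩ | ⟨i, r, hx, _, _⟩
  · exact (vB_ne_vA hx).elim
  · exact Or.inl rfl
  · obtain rfl := vB_inj hx
    exact Or.inr ⟨r, rfl, hr⟩
  · exact (vB_ne_vC hx).elim

lemma nbr_C {r : Pair c} {y : DVert c} (h : (DGadget c).Adj (vC r) y) :
    y = vB r.1.1 ∨ y = vB r.1.2 := by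
  rcases adj_elim h with ⟨i, hx, _⟩ | ⟨i, hx, _⟩ | ⟨i, s, hx, _, _⟩ | ⟨i, s, hx, rfl, hr⟩
  · exact (vC_ne_vA hx).elim
  · exact (vC_ne_vB hx).elim
  · exact (vC_ne_vB hx).elim
  · obtain rfl := vC_inj hx
    rcases hr with h | h
    · exact Or.inl (by rw [h])
    · exact Or.inr (by rw [h])

open SimpleGraph

def BInc (t : ℝ) {x y : DVert c} (p : (DGadget c).Walk x y) : Prop :=
  (t :: p.edges.map (glab c)).Chain' (· ≤ ·)

lemma binc_cons {t : ℝ} {x w y : DVert c} (h : (DGadget c).Adj x w) (p : (DGadget c).Walk w y) :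
    BInc t (Walk.cons h p) ↔ t ≤ glab c s(x, w) ∧ BInc (glab c s(x, w)) p := by
  simp only [BInc, Walk.edges_cons, List.map_cons, List.Chain', List.isChain_cons_cons]

lemma inc_iff_binc {x w y : DVert c} (h : (DGadget c).Adj x w) (p : (DGadget c).Walk w y) :
    IsIncreasing (DGadget c) (glab c) (Walk.cons h p) ↔ BInc (glab c s(x, w)) p := by
  simp only [IsIncreasing, BInc, Walk.edges_cons, List.map_cons]

lemma pair_not_le {r : Pair c} (h : ((r.1.2 : ℕ) : ℝ) ≤ ((r.1.1 : ℕ) : ℝ)) : False := by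
  have h2 : (r.1.2 : ℕ) ≤ (r.1.1 : ℕ) := by exact_mod_cast h
  have h3 : (r.1.1 : ℕ) < (r.1.2 : ℕ) := r.2
  omega

lemma reachBhigh {w : Fin c} {t : ℝ} (hw : ((w : ℕ) : ℝ) < t) {y : DVert c}
    (p : (DGadget c).Walk (vB w) y) (hp : p.IsPath) (hin : BInc t p) :
    y = vB w ∨ ∃ r : Pair c, y = vC r ∧
      ((r.1.1 = w ∧ t ≤ ((r.1.2 : ℕ) : ℝ)) ∨ (r.1.2 = w ∧ t ≤ ((r.1.1 : ℕ) : ℝ))) := by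
  cases p with
  | nil => exact Or.inl rfl
  | cons h p =>
    rename_i w1
    rw [Walk.cons_isPath_iff] at hp
    obtain ⟨hp, hxs⟩ := hp
    rw [binc_cons] at hin
    obtain ⟨hle, hin⟩ := hin
    rcases nbr_B h with rfl | ⟨r, rfl, hr⟩
    · rw [glab_BA] at hle
      exact absurd hle (not_le.mpr hw)
    · rcases hr with hr | hr
      · subst hr
        rw [glab_BC1] at hle hin
        cases p with
        | nil => exact Or.inr ⟨r, rfl, Or.inl ⟨rfl, hle⟩⟩
        | cons h2 p2 =>
          rename_i w2
          rw [binc_cons] at hin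
          obtain ⟨hle2, hin2⟩ := hin
          rcases nbr_C h2 with h3 | h3
          · subst h3
            refine absurd ?_ hxs
            rw [Walk.support_cons]
            exact List.mem_cons_of_mem _ p2.start_mem_support
          · subst h3
            rw [glab_CB2] at hle2
            exact (pair_not_le hle2).elim
      · subst hr
        rw [glab_BC2] at hle hin
        refine absurd hle (not_le.mpr ?_)
        exact lt_trans (show ((r.1.1 : ℕ) : ℝ) < ((r.1.2 : ℕ) : ℝ) by exact_mod_cast r.2) hw

lemma reachBA {m : Fin c} {y : DVert c} (p : (DGadget c).Walk (vB m) y)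
    (hp : p.IsPath) (hin : BInc ((m : ℕ) : ℝ) p) (hA : vA ∉ p.support) :
    y = vB m ∨ ∃ (o : Fin c) (ho : m < o), y = vC ⟨(m, o), ho⟩ := by
  cases p with
  | nil => exact Or.inl rfl
  | cons h p =>
    rename_i w1
    rw [Walk.cons_isPath_iff] at hp
    obtain ⟨hp, hxs⟩ := hp
    rw [binc_cons] at hin
    obtain ⟨hle, hin⟩ := hin
    rcases nbr_B h with rfl | ⟨r, rfl, hr⟩
    · refine absurd ?_ hA
      rw [Walk.support_cons]
      exact List.mem_cons_of_mem _ p.start_mem_support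
    · rcases hr with hr | hr
      · subst hr
        rw [glab_BC1] at hle hin
        cases p with
        | nil => exact Or.inr ⟨r.1.2, r.2, rfl⟩
        | cons h2 p2 =>
          rename_i w2
          rw [binc_cons] at hin
          obtain ⟨hle2, hin2⟩ := hin
          rcases nbr_C h2 with h3 | h3
          · subst h3
            refine absurd ?_ hxs
            rw [Walk.support_cons]
            exact List.mem_cons_of_mem _ p2.start_mem_support
          · subst h3
            rw [glab_CB2] at hle2
            exact (pair_not_le hle2).elim
      · subst hr
        rw [glab_BC2] at hle
        exact (pair_not_le hle).elim

lemma reachA {m : Fin c} {y : DVert c} (p : (DGadget c).Walk vA y)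
    (hp : p.IsPath) (hin : BInc ((m : ℕ) : ℝ) p) (hB : vB m ∉ p.support) :
    y = vA ∨ (∃ k, m < k ∧ y = vB k) ∨
      (∃ (k o : Fin c) (ho : k < o), m < k ∧ y = vC ⟨(k, o), ho⟩) := by
  cases p with
  | nil => exact Or.inl rfl
  | cons h p =>
    rename_i w1
    rw [Walk.cons_isPath_iff] at hp
    obtain ⟨hp, hxs⟩ := hp
    rw [binc_cons] at hin
    obtain ⟨hle, hin⟩ := hin
    obtain ⟨k, rfl⟩ := nbr_A h
    rw [glab_AB] at hle hin
    have hmk : m < k := by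
      have h1 : (m : ℕ) ≤ (k : ℕ) := by exact_mod_cast hle
      have h2 : k ≠ m := by
        rintro rfl
        refine absurd ?_ hB
        rw [Walk.support_cons]
        exact List.mem_cons_of_mem _ p.start_mem_support
      have h3 : (k : ℕ) ≠ (m : ℕ) := fun hh => h2 (Fin.ext hh)
      exact Fin.lt_def.mpr (by omega)
    rcases reachBA p hp hin hxs with rfl | ⟨o, ho, rfl⟩
    · exact Or.inr (Or.inl ⟨k, hmk, rfl⟩)
    · exact Or.inr (Or.inr ⟨k, o, ho, hmk, rfl⟩)

lemma reachCm {m : Fin c} {r : Pair c} (hr : r.1.1 = m ∨ r.1.2 = m) {y : DVert c}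
    (p : (DGadget c).Walk (vC r) y) (hp : p.IsPath)
    (hin : BInc (glab c s(vB m, vC r)) p) (hB : vB m ∉ p.support) :
    y = vC r ∨ (r.1.2 = m ∧ (y = vB r.1.1 ∨ ∃ r2 : Pair c, y = vC r2 ∧
      ((r2.1.1 = r.1.1 ∧ ((m : ℕ) : ℝ) ≤ ((r2.1.2 : ℕ) : ℝ)) ∨
       (r2.1.2 = r.1.1 ∧ ((m : ℕ) : ℝ) ≤ ((r2.1.1 : ℕ) : ℝ))))) := by
  cases p with
  | nil => exact Or.inl rfl
  | cons h p =>
    rename_i w1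
    rw [Walk.cons_isPath_iff] at hp
    obtain ⟨hp, hxs⟩ := hp
    rw [binc_cons] at hin
    obtain ⟨hle, hin⟩ := hin
    rcases hr with hr | hr
    · subst hr
      rcases nbr_C h with h3 | h3
      · subst h3
        refine absurd ?_ hB
        rw [Walk.support_cons]
        exact List.mem_cons_of_mem _ p.start_mem_support
      · subst h3
        rw [glab_BC1, glab_CB2] at hle
        exact (pair_not_le hle).elim
    · subst hr
      rcases nbr_C h with h3 | h3
      · subst h3
        rw [glab_BC2, glab_CB1] at hle
        rw [glab_CB1] at hin
        rcases reachBhigh (show ((r.1.1 : ℕ) : ℝ) < ((r.1.2 : ℕ) : ℝ) by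
            exact_mod_cast r.2) p hp hin with rfl | ⟨r2, rfl, hc⟩
        · exact Or.inr ⟨rfl, Or.inl rfl⟩
        · exact Or.inr ⟨rfl, Or.inr ⟨r2, rfl, hc⟩⟩
      · subst h3
        refine absurd ?_ hB
        rw [Walk.support_cons]
        exact List.mem_cons_of_mem _ p.start_mem_support

lemma reachBlow {w : Fin c} {t : ℝ} {qp : Pair c} (ht : t ≤ ((w : ℕ) : ℝ)) {y : DVert c}
    (p : (DGadget c).Walk (vB w) y) (hp : p.IsPath) (hin : BInc t p)
    (hq : vC qp ∉ p.support) :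
    y = vB w ∨ y = vA ∨ (∃ k, w < k ∧ y = vB k) ∨
    (∃ (k o : Fin c) (ho : k < o), w < k ∧ y = vC ⟨(k, o), ho⟩) ∨
    (∃ r : Pair c, y = vC r ∧
      ((r.1.1 = w ∧ t ≤ ((r.1.2 : ℕ) : ℝ)) ∨ (r.1.2 = w ∧ t ≤ ((r.1.1 : ℕ) : ℝ)))) ∨
    (∃ o : Fin c, o < w ∧ t ≤ ((o : ℕ) : ℝ) ∧ y = vB o ∧ qp.val ≠ (o, w)) ∨
    (∃ r2 : Pair c, y = vC r2 ∧ r2.1.1 < w ∧ w < r2.1.2 ∧ t ≤ ((r2.1.1 : ℕ) : ℝ) ∧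
      qp.val ≠ (r2.1.1, w)) := by
  cases p with
  | nil => exact Or.inl rfl
  | cons h p =>
    rename_i w1
    rw [Walk.cons_isPath_iff] at hp
    obtain ⟨hp, hxs⟩ := hp
    rw [binc_cons] at hin
    obtain ⟨hle, hin⟩ := hin
    rcases nbr_B h with rfl | ⟨r, rfl, hr⟩
    · rw [glab_BA] at hin
      have hq2 : vC qp ∉ p.support := fun hh => hq (by
        rw [Walk.support_cons]; exact List.mem_cons_of_mem _ hh)
      rcases reachA p hp hin hxs with rfl | ⟨k, hk, rfl⟩ | ⟨k, o, ho, hk, rfl⟩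
      · exact Or.inr (Or.inl rfl)
      · exact Or.inr (Or.inr (Or.inl ⟨k, hk, rfl⟩))
      · exact Or.inr (Or.inr (Or.inr (Or.inl ⟨k, o, ho, hk, rfl⟩)))
    · have hrq : r ≠ qp := by
        rintro rfl
        refine absurd ?_ hq
        rw [Walk.support_cons]
        exact List.mem_cons_of_mem _ p.start_mem_support
      rcases hr with hr | hr
      · subst hr
        rw [glab_BC1] at hle hin
        cases p with
        | nil =>
          exact Or.inr (Or.inr (Or.inr (Or.inr (Or.inl ⟨r, rfl, Or.inl ⟨rfl, hle⟩⟩))))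
        | cons h2 p2 =>
          rename_i w2
          rw [binc_cons] at hin
          obtain ⟨hle2, hin2⟩ := hin
          rcases nbr_C h2 with h3 | h3
          · subst h3
            refine absurd ?_ hxs
            rw [Walk.support_cons]
            exact List.mem_cons_of_mem _ p2.start_mem_support
          · subst h3
            rw [glab_CB2] at hle2
            exact (pair_not_le hle2).elim
      · subst hr
        rw [glab_BC2] at hle hin
        cases p with
        | nil =>
          exact Or.inr (Or.inr (Or.inr (Or.inr (Or.inl ⟨r, rfl, Or.inr ⟨rfl, hle⟩⟩))))
        | cons h2 p2 =>
          rename_i w2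
          rw [binc_cons] at hin
          obtain ⟨hle2, hin2⟩ := hin
          rw [Walk.cons_isPath_iff] at hp
          obtain ⟨hp2, hxs2⟩ := hp
          rcases nbr_C h2 with h3 | h3
          · subst h3
            rw [glab_CB1] at hle2 hin2
            have hqval : qp.val ≠ (r.1.1, r.1.2) := by
              intro hh
              exact hrq (Subtype.ext hh.symm).symm.symm
            rcases reachBhigh (show ((r.1.1 : ℕ) : ℝ) < ((r.1.2 : ℕ) : ℝ) by
                exact_mod_cast r.2) p2 hp2 hin2 with rfl | ⟨r2, rfl, hc⟩
            · exact Or.inr (Or.inr (Or.inr (Or.inr (Or.inr (Or.inl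
                ⟨r.1.1, r.2, hle, rfl, hqval⟩)))))
            · rcases hc with ⟨he, hge⟩ | ⟨he, hge⟩
              · have hne : r2 ≠ r := by
                  rintro rfl
                  exact hxs2 p2.end_mem_support
                have h12 : (r.1.2 : ℕ) < (r2.1.2 : ℕ) := by
                  have hge2 : (r.1.2 : ℕ) ≤ (r2.1.2 : ℕ) := by exact_mod_cast hge
                  have hne2 : (r2.1.2 : ℕ) ≠ (r.1.2 : ℕ) := by
                    intro hh
                    exact hne (pair_ext he (Fin.ext hh))
                  omega
                refine Or.inr (Or.inr (Or.inr (Or.inr (Or.inr (Or.inr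
                  ⟨r2, rfl, ?_, Fin.lt_def.mpr h12, ?_, ?_⟩)))))
                · rw [he]; exact r.2
                · rw [he]; exact hle
                · rw [he]; exact fun hh => hrq (Subtype.ext hh.symm).symm.symm
              · exfalso
                have h1 : (r2.1.1 : ℕ) < (r2.1.2 : ℕ) := r2.2
                have h2 : (r2.1.2 : ℕ) = (r.1.1 : ℕ) := by rw [he]
                have h3 : (r.1.1 : ℕ) < (r.1.2 : ℕ) := r.2
                have h4 : (r.1.2 : ℕ) ≤ (r2.1.1 : ℕ) := by exact_mod_cast hge
                omega
          · subst h3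
            refine absurd ?_ hxs
            rw [Walk.support_cons]
            exact List.mem_cons_of_mem _ p2.start_mem_support

lemma pair_eqN {r s : Pair c} (h : r = s) :
    ((r.1.1 : ℕ) = (s.1.1 : ℕ)) ∧ ((r.1.2 : ℕ) = (s.1.2 : ℕ)) := by
  subst h; exact ⟨rfl, rfl⟩

lemma pair_extN {r s : Pair c} (h1 : (r.1.1 : ℕ) = (s.1.1 : ℕ))
    (h2 : (r.1.2 : ℕ) = (s.1.2 : ℕ)) : r = s :=
  pair_ext (Fin.ext h1) (Fin.ext h2)

lemma helperA {i j : Fin c} (hij : i ≠ j) {y : DVert c}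
    (p : (DGadget c).Walk (vB i) y) (q : (DGadget c).Walk (vB j) y)
    (hp : p.IsPath) (hq : q.IsPath) (hAp : vA ∉ p.support) (hAq : vA ∉ q.support)
    (hbp : BInc ((i : ℕ) : ℝ) p) (hbq : BInc ((j : ℕ) : ℝ) q) : False := by
  rcases reachBA p hp hbp hAp with rfl | ⟨o, ho, rfl⟩
  · rcases reachBA q hq hbq hAq with he | ⟨o2, ho2, he⟩
    · exact hij (vB_inj he)
    · exact vB_ne_vC he
  · rcases reachBA q hq hbq hAq with he | ⟨o2, ho2, he⟩
    · exact vC_ne_vB he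
    · obtain ⟨e1, e2⟩ := pair_eqN (vC_inj he)
      exact hij (Fin.ext e1)

lemma helperBAC {m : Fin c} {r : Pair c} (hr : r.1.1 = m ∨ r.1.2 = m) {y : DVert c}
    (p : (DGadget c).Walk vA y) (q : (DGadget c).Walk (vC r) y)
    (hp : p.IsPath) (hq : q.IsPath)
    (hBp : vB m ∉ p.support) (hBq : vB m ∉ q.support)
    (hbp : BInc ((m : ℕ) : ℝ) p) (hbq : BInc (glab c s(vB m, vC r)) q) : False := by
  rcases reachA p hp hbp hBp with rfl | ⟨k, hk, rfl⟩ | ⟨k, o, ho, hk, rfl⟩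
  · rcases reachCm hr q hq hbq hBq with he | ⟨hm2, he | ⟨s, he, _⟩⟩
    · exact vA_ne_vC he
    · exact vA_ne_vB he
    · exact vA_ne_vC he
  · rcases reachCm hr q hq hbq hBq with he | ⟨hm2, he | ⟨s, he, _⟩⟩
    · exact vB_ne_vC he
    · have e1 : (k : ℕ) = (r.1.1 : ℕ) := congrArg Fin.val (vB_inj he)
      have e2 : (r.1.1 : ℕ) < (r.1.2 : ℕ) := r.2
      have e3 : (r.1.2 : ℕ) = (m : ℕ) := congrArg Fin.val hm2
      have e4 : (m : ℕ) < (k : ℕ) := hk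
      omega
    · exact vB_ne_vC he
  · rcases reachCm hr q hq hbq hBq with he | ⟨hm2, he | ⟨s, he, hor⟩⟩
    · obtain ⟨e1, e2⟩ := pair_eqN (vC_inj he)
      have e1' : (k : ℕ) = (r.1.1 : ℕ) := e1
      have e2' : (o : ℕ) = (r.1.2 : ℕ) := e2
      have e3 : (m : ℕ) < (k : ℕ) := hk
      have e4 : (k : ℕ) < (o : ℕ) := ho
      rcases hr with h5 | h5
      · have e5 : (r.1.1 : ℕ) = (m : ℕ) := congrArg Fin.val h5
        omega
      · have e5 : (r.1.2 : ℕ) = (m : ℕ) := congrArg Fin.val h5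
        omega
    · exact vC_ne_vB he
    · obtain ⟨e1, e2⟩ := pair_eqN (vC_inj he)
      have e1' : (k : ℕ) = (s.1.1 : ℕ) := e1
      have e2' : (o : ℕ) = (s.1.2 : ℕ) := e2
      have e3 : (m : ℕ) < (k : ℕ) := hk
      have e4 : (k : ℕ) < (o : ℕ) := ho
      have e5 : (r.1.1 : ℕ) < (r.1.2 : ℕ) := r.2
      have e6 : (r.1.2 : ℕ) = (m : ℕ) := congrArg Fin.val hm2
      rcases hor with ⟨h7, h8⟩ | ⟨h7, h8⟩
      · have e7 : (s.1.1 : ℕ) = (r.1.1 : ℕ) := congrArg Fin.val h7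
        omega
      · have e7 : (s.1.2 : ℕ) = (r.1.1 : ℕ) := congrArg Fin.val h7
        have e8 : (m : ℕ) ≤ (s.1.1 : ℕ) := by exact_mod_cast h8
        have e9 : (s.1.1 : ℕ) < (s.1.2 : ℕ) := s.2
        omega

lemma helperBCC {m : Fin c} {r1 r2 : Pair c}
    (h1 : r1.1.1 = m ∨ r1.1.2 = m) (h2 : r2.1.1 = m ∨ r2.1.2 = m) (hne : r1 ≠ r2)
    {y : DVert c}
    (p : (DGadget c).Walk (vC r1) y) (q : (DGadget c).Walk (vC r2) y)
    (hp : p.IsPath) (hq : q.IsPath)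
    (hBp : vB m ∉ p.support) (hBq : vB m ∉ q.support)
    (hbp : BInc (glab c s(vB m, vC r1)) p) (hbq : BInc (glab c s(vB m, vC r2)) q) :
    False := by
  have hm1 : ∀ z : Pair c, z.1.1 = m ∨ z.1.2 = m → z.1.2 = m →
      (z.1.1 : ℕ) < (m : ℕ) := by
    intro z _ hzm
    have := z.2
    have e : (z.1.2 : ℕ) = (m : ℕ) := congrArg Fin.val hzm
    omega
  rcases reachCm h1 p hp hbp hBp with he1 | ⟨hm12, he1 | ⟨s1, he1, hor1⟩⟩ <;>
    rcases reachCm h2 q hq hbq hBq with he2 | ⟨hm22, he2 | ⟨s2, he2, hor2⟩⟩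
  · exact hne (vC_inj (he1.symm.trans he2))
  · exact vC_ne_vB (he1.symm.trans he2)
  · -- y = vC r1 = vC s2, r2.1.2 = m
    obtain ⟨e1, e2⟩ := pair_eqN (vC_inj (he1.symm.trans he2))
    have f1 : (r2.1.1 : ℕ) < (m : ℕ) := hm1 r2 h2 hm22
    have f2 : (r2.1.2 : ℕ) = (m : ℕ) := congrArg Fin.val hm22
    rcases hor2 with ⟨g1, g2⟩ | ⟨g1, g2⟩
    · -- s2.1.1 = r2.1.1, m ≤ s2.1.2
      have g1N : (s2.1.1 : ℕ) = (r2.1.1 : ℕ) := congrArg Fin.val g1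
      have g2N : (m : ℕ) ≤ (s2.1.2 : ℕ) := by exact_mod_cast g2
      rcases h1 with hh | hh
      · have : (r1.1.1 : ℕ) = (m : ℕ) := congrArg Fin.val hh
        omega
      · have hhN : (r1.1.2 : ℕ) = (m : ℕ) := congrArg Fin.val hh
        -- r1 = s2 = r2
        apply hne
        apply pair_extN
        · omega
        · omega
    · have g1N : (s2.1.2 : ℕ) = (r2.1.1 : ℕ) := congrArg Fin.val g1
      have g2N : (m : ℕ) ≤ (s2.1.1 : ℕ) := by exact_mod_cast g2
      have := s2.2
      omega
  · exact vB_ne_vC (he1.symm.trans he2)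
  · -- y = vB r1.1.1 = vB r2.1.1, both .2 = m
    have e1 : (r1.1.1 : ℕ) = (r2.1.1 : ℕ) := congrArg Fin.val (vB_inj (he1.symm.trans he2))
    have e2 : (r1.1.2 : ℕ) = (m : ℕ) := congrArg Fin.val hm12
    have e3 : (r2.1.2 : ℕ) = (m : ℕ) := congrArg Fin.val hm22
    exact hne (pair_extN e1 (by omega))
  · exact vB_ne_vC (he1.symm.trans he2)
  · -- y = vC s1 = vC r2
    obtain ⟨e1, e2⟩ := pair_eqN (vC_inj (he2.symm.trans he1))
    have f1 : (r1.1.1 : ℕ) < (m : ℕ) := hm1 r1 h1 hm12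
    have f2 : (r1.1.2 : ℕ) = (m : ℕ) := congrArg Fin.val hm12
    rcases hor1 with ⟨g1, g2⟩ | ⟨g1, g2⟩
    · have g1N : (s1.1.1 : ℕ) = (r1.1.1 : ℕ) := congrArg Fin.val g1
      have g2N : (m : ℕ) ≤ (s1.1.2 : ℕ) := by exact_mod_cast g2
      rcases h2 with hh | hh
      · have : (r2.1.1 : ℕ) = (m : ℕ) := congrArg Fin.val hh
        omega
      · have hhN : (r2.1.2 : ℕ) = (m : ℕ) := congrArg Fin.val hh
        apply hne
        apply pair_extN
        · omega
        · omega
    · have g1N : (s1.1.2 : ℕ) = (r1.1.1 : ℕ) := congrArg Fin.val g1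
      have g2N : (m : ℕ) ≤ (s1.1.1 : ℕ) := by exact_mod_cast g2
      have := s1.2
      omega
  · exact vC_ne_vB (he1.symm.trans he2)
  · -- y = vC s1 = vC s2
    obtain ⟨e1, e2⟩ := pair_eqN (vC_inj (he1.symm.trans he2))
    have f1 : (r1.1.1 : ℕ) < (m : ℕ) := hm1 r1 h1 hm12
    have f2 : (r1.1.2 : ℕ) = (m : ℕ) := congrArg Fin.val hm12
    have f3 : (r2.1.1 : ℕ) < (m : ℕ) := hm1 r2 h2 hm22
    have f4 : (r2.1.2 : ℕ) = (m : ℕ) := congrArg Fin.val hm22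
    have hs1 := s1.2
    have hs2 := s2.2
    rcases hor1 with ⟨g1, g2⟩ | ⟨g1, g2⟩ <;> rcases hor2 with ⟨g3, g4⟩ | ⟨g3, g4⟩
    · have g1N : (s1.1.1 : ℕ) = (r1.1.1 : ℕ) := congrArg Fin.val g1
      have g3N : (s2.1.1 : ℕ) = (r2.1.1 : ℕ) := congrArg Fin.val g3
      exact hne (pair_extN (by omega) (by omega))
    · have g3N : (s2.1.2 : ℕ) = (r2.1.1 : ℕ) := congrArg Fin.val g3
      have g4N : (m : ℕ) ≤ (s2.1.1 : ℕ) := by exact_mod_cast g4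
      omega
    · have g1N : (s1.1.2 : ℕ) = (r1.1.1 : ℕ) := congrArg Fin.val g1
      have g2N : (m : ℕ) ≤ (s1.1.1 : ℕ) := by exact_mod_cast g2
      omega
    · have g1N : (s1.1.2 : ℕ) = (r1.1.1 : ℕ) := congrArg Fin.val g1
      have g2N : (m : ℕ) ≤ (s1.1.1 : ℕ) := by exact_mod_cast g2
      omega

lemma helperCBB {q0 : Pair c} {y : DVert c}
    (p : (DGadget c).Walk (vB q0.1.1) y) (q : (DGadget c).Walk (vB q0.1.2) y)
    (hp : p.IsPath) (hq : q.IsPath)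
    (hCq : vC q0 ∉ q.support) (hy : y ≠ vC q0)
    (hbp : BInc ((q0.1.2 : ℕ) : ℝ) p) (hbq : BInc ((q0.1.1 : ℕ) : ℝ) q) : False := by
  have hq2 := q0.2
  have hwlt : ((q0.1.1 : ℕ) : ℝ) < ((q0.1.2 : ℕ) : ℝ) := by exact_mod_cast hq2
  rcases reachBhigh hwlt p hp hbp with rfl | ⟨r, rfl, hc⟩
  · -- y = vB q0.1.1
    rcases reachBlow (le_of_lt hwlt) q hq hbq hCq with he | he | ⟨k, hk, he⟩ |
      ⟨k, o, ho, hk, he⟩ | ⟨r5, he, _⟩ | ⟨o, ho, hto, he, hpe⟩ | ⟨r7, he, _⟩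
    · have : (q0.1.1 : ℕ) = (q0.1.2 : ℕ) := congrArg Fin.val (vB_inj he)
      omega
    · exact vB_ne_vA he
    · have e1 : (q0.1.1 : ℕ) = (k : ℕ) := congrArg Fin.val (vB_inj he)
      have e2 : (q0.1.2 : ℕ) < (k : ℕ) := hk
      omega
    · exact vB_ne_vC he
    · exact vB_ne_vC he
    · -- vB q0.1.1 = vB o with q0.val ≠ (o, q0.1.2)
      obtain rfl := vB_inj he
      exact hpe rfl
    · exact vB_ne_vC he
  · -- y = vC r
    rcases hc with ⟨hc1, hc2⟩ | ⟨hc1, hc2⟩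
    swap
    · have e1 : (r.1.2 : ℕ) = (q0.1.1 : ℕ) := congrArg Fin.val hc1
      have e2 : (q0.1.2 : ℕ) ≤ (r.1.1 : ℕ) := by exact_mod_cast hc2
      have := r.2
      omega
    · -- r.1.1 = q0.1.1, q0.1.2 ≤ r.1.2
      have e1 : (r.1.1 : ℕ) = (q0.1.1 : ℕ) := congrArg Fin.val hc1
      have e2 : (q0.1.2 : ℕ) ≤ (r.1.2 : ℕ) := by exact_mod_cast hc2
      have e3 : (q0.1.2 : ℕ) ≠ (r.1.2 : ℕ) := by
        intro hh
        exact hy (congrArg vC (pair_extN e1 hh.symm))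
      rcases reachBlow (le_of_lt hwlt) q hq hbq hCq with he | he | ⟨k, hk, he⟩ |
        ⟨k, o, ho, hk, he⟩ | ⟨r5, he, hor⟩ | ⟨o, ho, hto, he, hpe⟩ | ⟨r7, he, f1, f2, f3, hpe⟩
      · exact vC_ne_vB he
      · exact vC_ne_vA he
      · exact vC_ne_vB he
      · obtain ⟨f1, f2⟩ := pair_eqN (vC_inj he)
        have f1' : (r.1.1 : ℕ) = (k : ℕ) := f1
        have f2' : (r.1.2 : ℕ) = (o : ℕ) := f2
        have f3 : (q0.1.2 : ℕ) < (k : ℕ) := hk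
        omega
      · obtain ⟨f1, f2⟩ := pair_eqN (vC_inj he)
        rcases hor with ⟨g1, g2⟩ | ⟨g1, g2⟩
        · have : (r5.1.1 : ℕ) = (q0.1.2 : ℕ) := congrArg Fin.val g1
          omega
        · have : (r5.1.2 : ℕ) = (q0.1.2 : ℕ) := congrArg Fin.val g1
          omega
      · exact vC_ne_vB he
      · obtain ⟨g1, g2⟩ := pair_eqN (vC_inj he)
        apply hpe
        have : r7.1.1 = q0.1.1 := Fin.ext (by omega)
        rw [this]

lemma first_eq {x y a b : DVert c} (ha : (DGadget c).Adj x a) (hb : (DGadget c).Adj x b)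
    (p : (DGadget c).Walk a y) (q : (DGadget c).Walk b y)
    (hp : (Walk.cons ha p).IsPath) (hq : (Walk.cons hb q).IsPath)
    (hip : IsIncreasing (DGadget c) (glab c) (Walk.cons ha p))
    (hiq : IsIncreasing (DGadget c) (glab c) (Walk.cons hb q)) : a = b := by
  by_contra hab
  rw [Walk.cons_isPath_iff] at hp hq
  rw [inc_iff_binc] at hip hiq
  have hyx : y ≠ x := by
    rintro rfl
    exact hp.2 p.end_mem_support
  rcases adj_elim ha with ⟨i, rfl, rfl⟩ | ⟨m, rfl, rfl⟩ | ⟨m, r, rfl, rfl, hr⟩ |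
    ⟨i, r, rfl, rfl, hr⟩
  · obtain ⟨j, rfl⟩ := nbr_A hb
    rw [glab_AB] at hip
    rw [glab_AB] at hiq
    exact helperA (fun hh => hab (congrArg vB hh)) p q hp.1 hq.1 hp.2 hq.2 hip hiq
  · rcases nbr_B hb with rfl | ⟨r, rfl, hr⟩
    · exact hab rfl
    · rw [glab_BA] at hip
      exact helperBAC hr p q hp.1 hq.1 hp.2 hq.2 hip hiq
  · rcases nbr_B hb with rfl | ⟨r2, rfl, hr2⟩
    · rw [glab_BA] at hiq
      exact helperBAC hr q p hq.1 hp.1 hq.2 hp.2 hiq hip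
    · exact helperBCC hr hr2 (fun hh => hab (congrArg vC hh)) p q hp.1 hq.1 hp.2 hq.2 hip hiq
  · rcases hr with rfl | rfl
    · rcases nbr_C hb with rfl | rfl
      · exact hab rfl
      · rw [glab_CB1] at hip
        rw [glab_CB2] at hiq
        exact helperCBB p q hp.1 hq.1 hq.2 hyx hip hiq
    · rcases nbr_C hb with rfl | rfl
      · rw [glab_CB2] at hip
        rw [glab_CB1] at hiq
        exact helperCBB q p hq.1 hp.1 hp.2 hyx hiq hip
      · exact hab rfl

lemma good_aux : ∀ (n : ℕ) {x y : DVert c} (p q : (DGadget c).Walk x y),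
    p.length ≤ n → p.IsPath → q.IsPath →
    IsIncreasing (DGadget c) (glab c) p → IsIncreasing (DGadget c) (glab c) q → p = q := by
  intro n
  induction n with
  | zero =>
    intro x y p q hlen hp hq _ _
    cases p with
    | nil => exact ((Walk.isPath_iff_eq_nil (p := q)).mp hq).symm
    | cons h p => simp [Walk.length_cons] at hlen
  | succ n ih =>
    intro x y p q hlen hp hq hip hiq
    cases p with
    | nil => exact ((Walk.isPath_iff_eq_nil (p := q)).mp hq).symm
    | cons ha p =>
      cases q with
      | nil =>
        exact absurd ((Walk.isPath_iff_eq_nil (p := _)).mp hp) (by simp)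
      | cons hb q =>
        obtain rfl := first_eq ha hb p q hp hq hip hiq
        have hlen2 : p.length ≤ n := by
          rw [Walk.length_cons] at hlen
          omega
        have hip2 : IsIncreasing (DGadget c) (glab c) p :=
          List.IsChain.tail ((inc_iff_binc ha p).mp hip)
        have hiq2 : IsIncreasing (DGadget c) (glab c) q :=
          List.IsChain.tail ((inc_iff_binc hb q).mp hiq)
        have hpq : p = q := ih p q hlen2 hp.of_cons hq.of_cons hip2 hiq2
        rw [hpq]

theorem glab_good : IsGoodLabeling (DGadget c) (glab c) :=
  fun _ _ p q hp hq hip hiq => good_aux p.length p q le_rfl hp hq hip hiq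

lemma glab_count : ((glab c) '' (DGadget c).edgeSet).ncard ≤ c := by
  have hsub : (glab c) '' (DGadget c).edgeSet ⊆
      Set.range (fun i : Fin c => ((i : ℕ) : ℝ)) := by
    rintro t ⟨e, he, rfl⟩
    induction e using Sym2.ind with
    | _ u v =>
      rw [SimpleGraph.mem_edgeSet] at he
      rcases adj_elim he with ⟨i, rfl, rfl⟩ | ⟨i, rfl, rfl⟩ | ⟨i, r, rfl, rfl, hr⟩ |
        ⟨i, r, rfl, rfl, hr⟩
      · exact ⟨i, (glab_AB i).symm⟩
      · exact ⟨i, (glab_BA i).symm⟩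
      · rcases hr with rfl | rfl
        · exact ⟨r.1.2, (glab_BC1 r).symm⟩
        · exact ⟨r.1.1, (glab_BC2 r).symm⟩
      · rcases hr with rfl | rfl
        · exact ⟨r.1.2, (glab_CB1 r).symm⟩
        · exact ⟨r.1.1, (glab_CB2 r).symm⟩
  have h1 := Set.ncard_le_ncard hsub (Set.finite_range _)
  refine h1.trans ?_
  rw [← Set.image_univ]
  refine (Set.ncard_image_le Set.finite_univ).trans ?_
  rw [Set.ncard_univ, Nat.card_eq_fintype_card, Fintype.card_fin]

end CG

/-- For every `c ≥ 1`, the `c`-color gadget `D_c` admits a `c`-gel, i.e. a good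
edge-labeling taking at most `c` distinct values. -/
theorem color_gadget_cgel (c : ℕ) (hc : 1 ≤ c) :
    ∃ lab : Sym2 (DVert c) → ℝ,
      IsGoodLabeling (DGadget c) lab ∧ (lab '' (DGadget c).edgeSet).ncard ≤ c := by
  exact ⟨CG.glab c, CG.glab_good, CG.glab_count⟩
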